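/- Let I be a squarefree monomial ideal in S = K[x₁,…,xₙ] over a field K with dim S/I ≥ 1. If x·I ∩ (I² : x) ⊆ I² for every variable x ∈ {x₁,…,xₙ}, then the maximal ideal m = (x₁,…,xₙ) is not an associated prime of S/I². -/

import Mathlib

open MvPolynomial CategoryTheory

/-- `Δ` is a simplicial complex on the vertex set `V`: it is closed under subsets,
contains the empty face and contains every singleton. -/
def IsSimplicialComplex {V : Type} (Δ : Set (Finset V)) : Prop :=
  (∀ F ∈ Δ, ∀ G, G ⊆ F → G ∈ Δ) ∧ (∅ : Finset V) ∈ Δ ∧ ∀ v : V, ({v} : Finset V) ∈ Δ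

/-- The Stanley–Reisner ideal of `Δ`: the ideal generated by the squarefree monomials
`∏_{i ∈ F} x_i` for the non-faces `F` of `Δ`. -/
noncomputable def SRIdeal (K : Type) [Field K] {V : Type} (Δ : Set (Finset V)) :
    Ideal (MvPolynomial V K) :=
  Ideal.span ((fun F : Finset V => ∏ i ∈ F, X i) '' {F | F ∉ Δ})

/-- The irrelevant maximal ideal `m = (x_v : v ∈ V)` of the polynomial ring. -/
noncomputable def mxIdeal (K : Type) [Field K] (V : Type) : Ideal (MvPolynomial V K) :=
  Ideal.span (Set.range (X : V → MvPolynomial V K))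

/-- The depth of the ideal `m` on the ring `A`: the supremum of the lengths of
regular sequences on `A` contained in `m`. -/
noncomputable def ringDepth (A : Type) [CommRing A] (m : Ideal A) : ℕ∞ :=
  sSup {d : ℕ∞ | ∃ rs : List A, (rs.length : ℕ∞) = d ∧ (∀ r ∈ rs, r ∈ m) ∧
    RingTheory.Sequence.IsRegular A rs}

/-- `S ⧸ J` is Cohen–Macaulay: its depth (with respect to the image of the maximal
ideal `m`) equals its Krull dimension. -/
def IsCMQuot (S : Type) [CommRing S] (m J : Ideal S) : Prop :=
  ((ringDepth (S ⧸ J) (m.map (Ideal.Quotient.mk J)) : ℕ∞) : WithBot ℕ∞) = ringKrullDim (S ⧸ J)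

/-- The second symbolic power of an ideal `I`: the intersection of `P ^ 2` over the
minimal primes `P` of `I`. -/
noncomputable def symb2 {S : Type} [CommRing S] (I : Ideal S) : Ideal S :=
  ⨅ P ∈ I.minimalPrimes, P ^ 2

/-- `Ext_A^i(A/m, A)`. -/
noncomputable def extPow (A : Type) [CommRing A] (m : Ideal A) (i : ℕ) : ModuleCat A :=
  ((Ext A (ModuleCat A) i).obj (Opposite.op (ModuleCat.of A (A ⧸ m)))).obj (ModuleCat.of A A)

/-- `S ⧸ J` (with maximal ideal the image of `m`) is Gorenstein: it is Cohen–Macaulay and,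
with `d = dim S/J` and `k = (S/J)/m` the residue field, the Bass numbers are those of a
Gorenstein ring: `Ext^i(k, S/J) = 0` for `i ≠ d` and `Ext^d(k, S/J) ≅ k`. -/
def IsGorQuot (S : Type) [CommRing S] (m J : Ideal S) : Prop :=
  IsCMQuot S m J ∧ ∃ d : ℕ, ((d : ℕ∞) : WithBot ℕ∞) = ringKrullDim (S ⧸ J) ∧
    (∀ i : ℕ, i ≠ d → Subsingleton (extPow (S ⧸ J) (m.map (Ideal.Quotient.mk J)) i)) ∧
    Nonempty ((extPow (S ⧸ J) (m.map (Ideal.Quotient.mk J)) d) ≃ₗ[S ⧸ J]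
      ((S ⧸ J) ⧸ (m.map (Ideal.Quotient.mk J))))

/-- `S ⧸ J` is quasi-Buchsbaum: `m` annihilates the local cohomology module
`H_m^i(S/J)` for all `i < dim S/J`. -/
def IsQuasiBuchsbaum (S : Type) [CommRing S] (m J : Ideal S) : Prop :=
  ∀ i : ℕ, ((i : ℕ∞) : WithBot ℕ∞) < ringKrullDim (S ⧸ J) →
    ∀ r ∈ m, ∀ x : (localCohomology m i).obj (ModuleCat.of S (S ⧸ J)), r • x = 0

/-- `S ⧸ J` has finite local cohomology (FLC): the local cohomology module `H_m^i(S/J)`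
has finite length (equivalently, is both Noetherian and Artinian) for all `i < dim S/J`. -/
def HasFLC (S : Type) [CommRing S] (m J : Ideal S) : Prop :=
  ∀ i : ℕ, ((i : ℕ∞) : WithBot ℕ∞) < ringKrullDim (S ⧸ J) →
    IsNoetherian S ((localCohomology m i).obj (ModuleCat.of S (S ⧸ J))) ∧
    IsArtinian S ((localCohomology m i).obj (ModuleCat.of S (S ⧸ J)))

/-- Serre's condition `(S₂)`: for every prime `P` of `A`,
`depth A_P ≥ min (dim A_P) 2`. -/
def SerreS2 (A : Type) [CommRing A] : Prop :=
  ∀ (P : Ideal A) (hP : P.IsPrime),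
    haveI := hP
    min (ringKrullDim (Localization.AtPrime P)) 2 ≤
      ((ringDepth (Localization.AtPrime P)
        (IsLocalRing.maximalIdeal (Localization.AtPrime P)) : ℕ∞) : WithBot ℕ∞)

/-- The link of a face `F` in `Δ`. -/
def linkOf {V : Type} [DecidableEq V] (Δ : Set (Finset V)) (F : Finset V) : Set (Finset V) :=
  {H | H ∈ Δ ∧ H ∩ F = ∅ ∧ H ∪ F ∈ Δ}

/-- The 1-skeleton of the complex `Γ` (the graph on the vertices of `Γ` whose edges are the
1-dimensional faces of `Γ`) is connected of diameter at most 2: any two distinct vertices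
are joined by a path of length at most 2. -/
def skeletonDiamLE2 {V : Type} [DecidableEq V] (Γ : Set (Finset V)) : Prop :=
  ∀ u v : V, ({u} : Finset V) ∈ Γ → ({v} : Finset V) ∈ Γ → u ≠ v →
    (({u, v} : Finset V) ∈ Γ ∨ ∃ w : V, ({u, w} : Finset V) ∈ Γ ∧ ({w, v} : Finset V) ∈ Γ)

/-- `linkOf Δ F` has dimension at least 1, i.e. it has a face with at least 2 vertices. -/
def linkDimGE1 {V : Type} [DecidableEq V] (Δ : Set (Finset V)) (F : Finset V) : Prop :=
  ∃ H ∈ linkOf Δ F, 2 ≤ H.card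

/-- The squarefree monomial ideal generated by the monomials `x^H = ∏_{a ∈ H} x_a`, `H ∈ E`. -/
noncomputable def sqfIdeal (K : Type) [Field K] {V : Type} (E : Set (Finset V)) :
    Ideal (MvPolynomial V K) :=
  Ideal.span ((fun H : Finset V => ∏ a ∈ H, X a) '' E)

/-- The edges `H₁, H₂, H₃` make the special triangle `{i, j, k}`. -/
def MakeSpecialTriangle {V : Type} [DecidableEq V] (H₁ H₂ H₃ : Finset V) (i j k : V) : Prop :=
  i ≠ j ∧ j ≠ k ∧ i ≠ k ∧
  H₁ ∩ ({i, j, k} : Finset V) = {j, k} ∧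
  H₂ ∩ ({i, j, k} : Finset V) = {i, k} ∧
  H₃ ∩ ({i, j, k} : Finset V) = {i, j}


noncomputable def expOf {n : ℕ} (H : Finset (Fin n)) : Fin n →₀ ℕ :=
  ∑ a ∈ H, Finsupp.single a 1

lemma expOf_apply {n : ℕ} (H : Finset (Fin n)) (w : Fin n) :
    expOf H w = if w ∈ H then 1 else 0 := by
  classical
  simp only [expOf, Finsupp.finset_sum_apply, Finsupp.single_apply]
  exact Finset.sum_ite_eq' H w (fun _ => 1)

lemma expOf_eq_one {n : ℕ} {H : Finset (Fin n)} {z : Fin n} (h : z ∈ H) :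
    expOf H z = 1 := by rw [expOf_apply, if_pos h]

lemma expOf_eq_zero {n : ℕ} {H : Finset (Fin n)} {z : Fin n} (h : z ∉ H) :
    expOf H z = 0 := by rw [expOf_apply, if_neg h]

lemma prod_X_eq_monomial_expOf (K : Type) [Field K] {n : ℕ} (H : Finset (Fin n)) :
    (∏ a ∈ H, (X a : MvPolynomial (Fin n) K)) = monomial (expOf H) 1 := by
  classical
  induction H using Finset.induction with
  | empty => simp [expOf]
  | @insert a s ha ih =>
      rw [Finset.prod_insert ha, ih]
      show monomial (Finsupp.single a 1) 1 * _ = _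
      rw [monomial_mul, one_mul,
        show expOf (insert a s) = Finsupp.single a 1 + expOf s from Finset.sum_insert ha]

lemma sqf_eq_span (K : Type) [Field K] {n : ℕ} (E : Set (Finset (Fin n))) :
    sqfIdeal K E = Ideal.span ((fun d => monomial d (1 : K)) '' (expOf '' E)) := by
  rw [sqfIdeal, Set.image_image]
  congr 1
  exact Set.image_congr fun H _ => prod_X_eq_monomial_expOf K H

lemma sq_eq_span (K : Type) [Field K] {n : ℕ} (E : Set (Finset (Fin n))) :
    (sqfIdeal K E) ^ 2 =
      Ideal.span ((fun d => monomial d (1 : K)) ''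
        Set.image2 (· + ·) (expOf '' E) (expOf '' E)) := by
  rw [pow_two, sqf_eq_span, Ideal.span_mul_span']
  congr 1
  rw [← Set.image2_mul, Set.image2_image_left, Set.image2_image_right, Set.image_image2]
  apply Set.image2_congr
  intro a _ b _
  rw [monomial_mul, one_mul]

lemma mem_sq_iff (K : Type) [Field K] {n : ℕ} (E : Set (Finset (Fin n)))
    (p : MvPolynomial (Fin n) K) :
    p ∈ (sqfIdeal K E) ^ 2 ↔ ∀ xi ∈ p.support,
      ∃ H1 ∈ E, ∃ H2 ∈ E, expOf H1 + expOf H2 ≤ xi := by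
  rw [sq_eq_span, mem_ideal_span_monomial_image]
  constructor
  · intro h xi hxi
    obtain ⟨t, ht, hle⟩ := h xi hxi
    obtain ⟨g1, ⟨H1, h1, rfl⟩, g2, ⟨H2, h2, rfl⟩, rfl⟩ := ht
    exact ⟨H1, h1, H2, h2, hle⟩
  · intro h xi hxi
    obtain ⟨H1, h1, H2, h2, hle⟩ := h xi hxi
    exact ⟨_, Set.mem_image2_of_mem (Set.mem_image_of_mem _ h1) (Set.mem_image_of_mem _ h2), hle⟩

lemma mx_eq_ker (K : Type) [Field K] (n : ℕ) :
    Ideal.span (Set.range (X : Fin n → MvPolynomial (Fin n) K)) =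
      RingHom.ker (constantCoeff : MvPolynomial (Fin n) K →+* K) := by
  ext p
  rw [← Set.image_univ, mem_ideal_span_X_image, RingHom.mem_ker]
  constructor
  · intro h
    rw [show (constantCoeff p : K) = coeff 0 p from rfl]
    by_contra h0
    obtain ⟨i, _, hi⟩ := h 0 (mem_support_iff.2 h0)
    simp at hi
  · intro h m hm
    have hm0 : m ≠ 0 := by
      rintro rfl
      exact mem_support_iff.1 hm h
    obtain ⟨i, hi⟩ := Finsupp.ne_iff.1 hm0
    exact ⟨i, Set.mem_univ i, by simpa using hi⟩

lemma mx_isMaximal (K : Type) [Field K] (n : ℕ) :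
    (Ideal.span (Set.range (X : Fin n → MvPolynomial (Fin n) K))).IsMaximal := by
  rw [mx_eq_ker]
  exact RingHom.ker_isMaximal_of_surjective _ fun k => ⟨C k, @constantCoeff_C K (Fin n) _ k⟩

lemma exists_lt_of_one_le_krullDim (α : Type*) [Preorder α]
    (h : (1 : WithBot ℕ∞) ≤ Order.krullDim α) : ∃ a b : α, a < b := by
  by_contra hno
  push_neg at hno
  have : Order.krullDim α ≤ 0 := by
    rw [Order.krullDim]
    apply iSup_le
    intro p
    have hl : p.length = 0 := by
      by_contra hl
      exact absurd (p.step ⟨0, Nat.pos_of_ne_zero hl⟩) (hno _ _)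
    simp [hl]
  exact absurd (le_trans h this) (by decide)

/-- If `I` is a squarefree monomial ideal with `dim S/I ≥ 1` and
`x·I ∩ (I² : x) ⊆ I²` for every variable `x`, then the maximal ideal
`m = (x₁, …, xₙ)` is not an associated prime of `S/I²`. -/
theorem stmt13 (n : ℕ) (K : Type) [Field K] (E : Set (Finset (Fin n)))
    (hdim : ((1 : ℕ∞) : WithBot ℕ∞) ≤
      ringKrullDim (MvPolynomial (Fin n) K ⧸ sqfIdeal K E))
    (hcolon : ∀ v : Fin n,
      Ideal.span {(X v : MvPolynomial (Fin n) K)} * sqfIdeal K E ⊓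
        Submodule.colon ((sqfIdeal K E) ^ 2) (Ideal.span {(X v : MvPolynomial (Fin n) K)}) ≤
      (sqfIdeal K E) ^ 2) :
    ¬ IsAssociatedPrime (mxIdeal K (Fin n))
        (MvPolynomial (Fin n) K ⧸ (sqfIdeal K E) ^ 2) := by
  classical
  intro h
  obtain ⟨hpr, f, hf⟩ := (isAssociatedPrime_iff).1 h
  obtain ⟨g, rfl⟩ := Submodule.Quotient.mk_surjective _ f
  have hXg : ∀ v : Fin n, X v * g ∈ (sqfIdeal K E) ^ 2 := by
    intro v
    have hXm : (X v : MvPolynomial (Fin n) K) ∈ mxIdeal K (Fin n) :=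
      Ideal.subset_span ⟨v, rfl⟩
    rw [hf, Submodule.mem_colon_singleton, Submodule.mem_bot] at hXm
    rwa [← Submodule.Quotient.mk_smul, Submodule.Quotient.mk_eq_zero, smul_eq_mul] at hXm
  have hgI : g ∉ (sqfIdeal K E) ^ 2 := by
    intro hg
    have h0 : (Submodule.Quotient.mk g :
        MvPolynomial (Fin n) K ⧸ ((sqfIdeal K E) ^ 2 :
          Ideal (MvPolynomial (Fin n) K))) = 0 :=
      (Submodule.Quotient.mk_eq_zero _).2 hg
    rw [h0, show (⊥ : Submodule (MvPolynomial (Fin n) K) (MvPolynomial (Fin n) K ⧸ (sqfIdeal K E) ^ 2)).colon {0} = ⊤ from by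
      ext r; simp [Submodule.mem_colon_singleton]] at hf
    exact hpr.ne_top hf
  rw [mem_sq_iff] at hgI
  push_neg at hgI
  obtain ⟨d, hd, hdno⟩ := hgI
  have hstep : ∀ v : Fin n, ∃ H1 ∈ E, ∃ H2 ∈ E,
      expOf H1 + expOf H2 ≤ Finsupp.single v 1 + d :=
    fun v => (mem_sq_iff K E _).1 (hXg v) (Finsupp.single v 1 + d)
      (by rw [mem_support_iff, coeff_X_mul]; exact mem_support_iff.1 hd)
  have hv0 : ∃ v0 : Fin n, ∀ H ∈ E, ¬ H ⊆ {v0} := by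
    by_contra hno
    push_neg at hno
    have hXI : ∀ v : Fin n, (X v : MvPolynomial (Fin n) K) ∈ sqfIdeal K E := by
      intro v
      obtain ⟨H, hHE, hsub⟩ := hno v
      have hgen : (∏ a ∈ H, (X a : MvPolynomial (Fin n) K)) ∈ sqfIdeal K E :=
        Ideal.subset_span (Set.mem_image_of_mem _ hHE)
      rcases Finset.subset_singleton_iff.1 hsub with rfl | rfl
      · simp only [Finset.prod_empty] at hgen
        exact Ideal.eq_top_iff_one _ |>.2 hgen ▸ Submodule.mem_top
      · simpa using hgen
    have hmI : mxIdeal K (Fin n) ≤ sqfIdeal K E := by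
      rw [mxIdeal, Ideal.span_le]
      rintro _ ⟨v, rfl⟩
      exact hXI v
    obtain ⟨a, b, hab⟩ := exists_lt_of_one_le_krullDim _ hdim
    have hIP : ∀ c : PrimeSpectrum (MvPolynomial (Fin n) K ⧸ sqfIdeal K E),
        sqfIdeal K E ≤ c.asIdeal.comap (Ideal.Quotient.mk (sqfIdeal K E)) := by
      intro c x hx
      show Ideal.Quotient.mk (sqfIdeal K E) x ∈ c.asIdeal
      rw [Ideal.Quotient.eq_zero_iff_mem.2 hx]
      exact c.asIdeal.zero_mem
    have hm : (mxIdeal K (Fin n)).IsMaximal := by rw [mxIdeal]; exact mx_isMaximal K n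
    have heq : ∀ c : PrimeSpectrum (MvPolynomial (Fin n) K ⧸ sqfIdeal K E),
        c.asIdeal.comap (Ideal.Quotient.mk (sqfIdeal K E)) = mxIdeal K (Fin n) := by
      intro c
      haveI := c.2
      have hP : (c.asIdeal.comap (Ideal.Quotient.mk (sqfIdeal K E))).IsPrime :=
        Ideal.IsPrime.comap _
      exact (hm.eq_of_le hP.ne_top (le_trans hmI (hIP c))).symm
    have : a.asIdeal = b.asIdeal := by
      rw [← Ideal.map_comap_of_surjective _ Ideal.Quotient.mk_surjective a.asIdeal,
        ← Ideal.map_comap_of_surjective _ Ideal.Quotient.mk_surjective b.asIdeal,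
        heq a, heq b]
    exact absurd (PrimeSpectrum.ext this) hab.ne
  obtain ⟨v0, hv0⟩ := hv0
  obtain ⟨H1, h1, H2, h2, hle⟩ := hstep v0
  have key : ∀ H1 H2 : Finset (Fin n), H1 ∈ E → H2 ∈ E →
      expOf H1 + expOf H2 ≤ Finsupp.single v0 1 + d → v0 ∈ H1 → False := by
    intro H1 H2 h1 h2 hle hv01
    obtain ⟨w, hwH1, hwv0⟩ := Finset.not_subset.1 (hv0 H1 h1)
    rw [Finset.mem_singleton] at hwv0
    have hled : Finsupp.single w 1 + expOf H2 ≤ d := by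
      rw [Finsupp.le_def]
      intro z
      have hz := Finsupp.le_def.1 hle z
      rw [Finsupp.add_apply] at hz ⊢
      rw [Finsupp.add_apply] at hz
      by_cases hzw : z = w
      · subst hzw
        rw [Finsupp.single_eq_same]
        rw [expOf_eq_one hwH1,
          Finsupp.single_eq_of_ne' (fun hh => hwv0 hh.symm), zero_add] at hz
        exact hz
      · rw [Finsupp.single_eq_of_ne' (fun hh => hzw hh.symm), zero_add]
        by_cases hzv : z = v0
        · subst hzv
          rw [expOf_eq_one hv01, Finsupp.single_eq_same] at hz
          exact Nat.le_of_add_le_add_left hz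
        · rw [Finsupp.single_eq_of_ne' (fun hh => hzv hh.symm), zero_add] at hz
          exact le_trans (Nat.le_add_left _ _) hz
    obtain ⟨c, hc⟩ := le_iff_exists_add.1 hled
    have huI2 : (monomial d (1 : K) : MvPolynomial (Fin n) K) ∉ (sqfIdeal K E) ^ 2 := by
      rw [mem_sq_iff]
      push_neg
      refine ⟨d, ?_, hdno⟩
      rw [support_monomial, if_neg one_ne_zero]
      exact Finset.mem_singleton_self d
    apply huI2
    apply hcolon w
    constructor
    · have h2I : (monomial (expOf H2) (1 : K) * monomial c 1 :
          MvPolynomial (Fin n) K) ∈ sqfIdeal K E := by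
        apply Ideal.mul_mem_right
        rw [← prod_X_eq_monomial_expOf]
        exact Ideal.subset_span (Set.mem_image_of_mem _ h2)
      have hmm := Ideal.mul_mem_mul (Ideal.mem_span_singleton_self
        (X w : MvPolynomial (Fin n) K)) h2I
      have hXwid : (X w : MvPolynomial (Fin n) K) * (monomial (expOf H2) 1 * monomial c 1)
          = monomial d 1 := by
        rw [show (X w : MvPolynomial (Fin n) K) = monomial (Finsupp.single w 1) 1 from rfl,
          monomial_mul, monomial_mul, one_mul, one_mul, ← add_assoc, ← hc]
      rwa [hXwid] at hmm
    · rw [SetLike.mem_coe, Submodule.mem_colon]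
      intro p hp
      obtain ⟨cc, rfl⟩ := Ideal.mem_span_singleton'.1 hp
      have hXwu : (X w : MvPolynomial (Fin n) K) * monomial d 1 ∈ (sqfIdeal K E) ^ 2 := by
        rw [mem_sq_iff]
        intro xi hxi
        have hxieq : xi = Finsupp.single w 1 + d := by
          rw [show (X w : MvPolynomial (Fin n) K) * monomial d 1
              = monomial (Finsupp.single w 1 + d) 1 from by
            rw [show (X w : MvPolynomial (Fin n) K) = monomial (Finsupp.single w 1) 1 from rfl,
              monomial_mul, one_mul]] at hxi
          rw [support_monomial, if_neg one_ne_zero, Finset.mem_singleton] at hxi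
          exact hxi
        rw [hxieq]
        exact hstep w
      have heq2 : (monomial d 1 : MvPolynomial (Fin n) K) • (cc * X w)
          = cc * (X w * monomial d 1) := by
        rw [smul_eq_mul]; ring
      rw [heq2]
      exact Ideal.mul_mem_left _ cc hXwu
  have hmem : v0 ∈ H1 ∨ v0 ∈ H2 → False := by
    rintro (h | h)
    · exact key H1 H2 h1 h2 hle h
    · exact key H2 H1 h2 h1 (by rwa [add_comm]) h
  apply hmem
  by_contra hno
  push_neg at hno
  apply hdno H1 h1 H2 h2
  rw [Finsupp.le_def]
  intro z
  have hz := Finsupp.le_def.1 hle z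
  simp only [Finsupp.add_apply] at hz ⊢
  by_cases hzv : z = v0
  · subst hzv
    rw [expOf_eq_zero hno.1, expOf_eq_zero hno.2]
    exact Nat.zero_le _
  · rwa [Finsupp.single_eq_of_ne' (fun hh => hzv hh.symm), zero_add] at hz
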